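/- For a homogeneous degree-d curve: if d > 1 and the singular point has a single Puiseux pair (p,q) with gcd(p,q) = 1 and 1 < p < q, and the genus formula (d-1)(d-2) = (p-1)(q-1) holds with the constraint p ∈ (d/2, d-1), then for d sufficiently large there is no such pair: there exists d₀ such that for all d > d₀ there are no coprime p, q with d/2 < p < d-1 and (p-1)(q-1) = (d-1)(d-2). -/
import Mathlib


open scoped Classical in
theorem no_large_degree_with_multiplicity_in_half_range :
    ∃ d₀ : ℕ, ∀ d : ℕ, d₀ < d →
      ¬ ∃ p q : ℕ, Nat.Coprime p q ∧ 1 < p ∧ p < q ∧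
          d < 2 * p ∧ p < d - 1 ∧
          (p - 1) * (q - 1) = (d - 1) * (d - 2) ∧
          (∀ j : ℕ, j ≤ d - 2 →
            ((Finset.range (j * d + 1)).filter
                (fun n => ∃ a b : ℕ, n = a * p + b * q)).card
              = (j + 1) * (j + 2) / 2) := by
  use 10
  intro d hd
  rintro ⟨p, q, hcop, hp1, hpq, hdp, hpd, hgenus, hcount⟩
  have h1 := hcount 1 (by omega)
  by_cases hq : q ≤ d
  · -- arithmetic contradiction with the genus formula
    obtain ⟨a, rfl⟩ : ∃ a, d = a + 11 := ⟨d - 11, by omega⟩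
    have hle : (p - 1) * (q - 1) ≤ (a + 8) * (a + 10) :=
      Nat.mul_le_mul (by omega) (by omega)
    have e1 : a + 11 - 1 = a + 10 := by omega
    have e2 : a + 11 - 2 = a + 9 := by omega
    rw [e1, e2] at hgenus
    nlinarith [hgenus, hle]
  · -- q > d: the semigroup elements below d+1 are just {0, p}, card 2 ≠ 3
    have hset : (Finset.range (1 * d + 1)).filter
        (fun n => ∃ a b : ℕ, n = a * p + b * q) = {0, p} := by
      ext n
      simp only [Finset.mem_filter, Finset.mem_range, Finset.mem_insert,
        Finset.mem_singleton]
      constructor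
      · rintro ⟨hn, a, b, rfl⟩
        rw [one_mul] at hn
        have hb : b = 0 := by
          by_contra hb0
          have : q ≤ b * q := Nat.le_mul_of_pos_left q (by omega)
          omega
        subst hb
        simp only [Nat.zero_mul, Nat.add_zero] at hn ⊢
        have ha : a ≤ 1 := by
          by_contra ha0
          have : 2 * p ≤ a * p := Nat.mul_le_mul_right p (by omega)
          omega
        interval_cases a <;> omega
      · rintro (rfl | rfl)
        · exact ⟨by omega, 0, 0, by simp⟩
        · exact ⟨by omega, 1, 0, by simp⟩
    rw [hset] at h1
    rw [Finset.card_insert_of_notMem (by simp; omega), Finset.card_singleton] at h1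
    omega
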